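/- Let (X,d) be a metric space with a bornology 𝔅. If X satisfies α₄(Γ_{𝔅^s},Γ_{𝔅^s}), then X satisfies S₁(Γ_{𝔅^s},Γ_{𝔅^s}). -/

import Mathlib

open Set Metric

variable {X : Type*} [MetricSpace X]

/-- The δ-enlargement of a set `B`: union of open δ-balls around points of `B`. -/
def enl (B : Set X) (δ : ℝ) : Set X := ⋃ b ∈ B, Metric.ball b δ

/-- A bornology (in the sense of Hu/Hogbe-Nlend): a family of nonempty subsets
covering `X`, closed under finite unions and hereditary. -/
def IsBorn (𝔅 : Set (Set X)) : Prop :=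
  (∀ B ∈ 𝔅, B.Nonempty) ∧ (⋃₀ 𝔅 = Set.univ) ∧
  (∀ B₁ ∈ 𝔅, ∀ B₂ ∈ 𝔅, B₁ ∪ B₂ ∈ 𝔅) ∧
  (∀ B ∈ 𝔅, ∀ A : Set X, A ⊆ B → A.Nonempty → A ∈ 𝔅)

/-- The bornology has a base consisting of closed sets. -/
def HasClosedBase (𝔅 : Set (Set X)) : Prop :=
  ∃ 𝔅₀ ⊆ 𝔅, (∀ B ∈ 𝔅₀, IsClosed B) ∧ ∀ B ∈ 𝔅, ∃ B₀ ∈ 𝔅₀, B ⊆ B₀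

/-- A strong 𝔅-cover (𝔅ˢ-cover): an open cover 𝒰 of X with X ∉ 𝒰 such that for
every `B ∈ 𝔅` some δ-enlargement of `B` lies in a member of 𝒰. -/
def IsBsCover (𝔅 : Set (Set X)) (𝒰 : Set (Set X)) : Prop :=
  (∀ U ∈ 𝒰, IsOpen U) ∧ Set.univ ∉ 𝒰 ∧ ⋃₀ 𝒰 = Set.univ ∧
  ∀ B ∈ 𝔅, ∃ U ∈ 𝒰, ∃ δ > 0, enl B δ ⊆ U

/-- A γ_{𝔅ˢ}-cover: an infinite countable open cover `(U n)` such that for every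
`B ∈ 𝔅` there are `n₀` and positive reals `δ n` (for `n ≥ n₀`) with
`enl B (δ n) ⊆ U n` for all `n ≥ n₀`. -/
def IsGammaCover (𝔅 : Set (Set X)) (U : ℕ → Set X) : Prop :=
  (∀ n, IsOpen (U n)) ∧ (⋃ n, U n) = Set.univ ∧ (Set.range U).Infinite ∧
  ∀ B ∈ 𝔅, ∃ n₀ : ℕ, ∃ δ : ℕ → ℝ, ∀ n ≥ n₀, 0 < δ n ∧ enl B (δ n) ⊆ U n

/-- `g` belongs to the basic τˢ_𝔅-neighborhood `[B,ε]ˢ(f)`. -/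
def SNbhd (B : Set X) (ε : ℝ) (f g : C(X, ℝ)) : Prop :=
  ∃ δ > 0, ∀ x ∈ enl B δ, |g x - f x| < ε

/-- `f` lies in the τˢ_𝔅-closure of `A`. -/
def SCl (𝔅 : Set (Set X)) (A : Set C(X, ℝ)) (f : C(X, ℝ)) : Prop :=
  ∀ B ∈ 𝔅, ∀ ε > 0, ∃ g ∈ A, SNbhd B ε f g

/-- The sequence `g` τˢ_𝔅-converges to `f`. -/
def SConv (𝔅 : Set (Set X)) (g : ℕ → C(X, ℝ)) (f : C(X, ℝ)) : Prop :=
  ∀ B ∈ 𝔅, ∀ ε > 0, ∃ N : ℕ, ∀ n ≥ N, SNbhd B ε f (g n)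

/-- S₁(Γ_{𝔅ˢ},Γ_{𝔅ˢ}). -/
def S1Gamma (𝔅 : Set (Set X)) : Prop :=
  ∀ U : ℕ → ℕ → Set X, (∀ n, IsGammaCover 𝔅 (U n)) →
    ∃ f : ℕ → ℕ, IsGammaCover 𝔅 (fun n => U n (f n))

/-- α₂(Γ_{𝔅ˢ},Γ_{𝔅ˢ}). -/
def Alpha2Gamma (𝔅 : Set (Set X)) : Prop :=
  ∀ U : ℕ → ℕ → Set X, (∀ n, IsGammaCover 𝔅 (U n)) →
    ∃ V : ℕ → Set X, IsGammaCover 𝔅 V ∧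
      ∀ n, (Set.range V ∩ Set.range (U n)).Infinite

/-- α₃(Γ_{𝔅ˢ},Γ_{𝔅ˢ}). -/
def Alpha3Gamma (𝔅 : Set (Set X)) : Prop :=
  ∀ U : ℕ → ℕ → Set X, (∀ n, IsGammaCover 𝔅 (U n)) →
    ∃ V : ℕ → Set X, IsGammaCover 𝔅 V ∧
      {n | (Set.range V ∩ Set.range (U n)).Infinite}.Infinite

/-- α₄(Γ_{𝔅ˢ},Γ_{𝔅ˢ}). -/
def Alpha4Gamma (𝔅 : Set (Set X)) : Prop :=
  ∀ U : ℕ → ℕ → Set X, (∀ n, IsGammaCover 𝔅 (U n)) →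
    ∃ V : ℕ → Set X, IsGammaCover 𝔅 V ∧
      {n | (Set.range V ∩ Set.range (U n)).Nonempty}.Infinite

lemma enl_mono {B : Set X} {δ δ' : ℝ} (h : δ ≤ δ') : enl B δ ⊆ enl B δ' :=
  Set.iUnion₂_mono fun _ _ => Metric.ball_subset_ball h

lemma mem_enl_self {B : Set X} {x : X} (hx : x ∈ B) {δ : ℝ} (hδ : 0 < δ) :
    x ∈ enl B δ :=
  Set.mem_biUnion hx (Metric.mem_ball_self hδ)

def TailP (𝔅 : Set (Set X)) (C : ℕ → Set X) : Prop :=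
  ∀ B ∈ 𝔅, ∃ m₀ : ℕ, ∃ δ : ℕ → ℝ, ∀ m ≥ m₀, 0 < δ m ∧ enl B (δ m) ⊆ C m

lemma tailP_comp {𝔅 : Set (Set X)} {C : ℕ → Set X} (h : TailP 𝔅 C)
    (e : ℕ → ℕ) (he : ∀ m, m ≤ e m) : TailP 𝔅 (fun m => C (e m)) := by
  intro B hB
  obtain ⟨m₀, δ, H⟩ := h B hB
  exact ⟨m₀, fun m => δ (e m), fun m hm => H (e m) (le_trans hm (he m))⟩

lemma tailP_inter {𝔅 : Set (Set X)} {C₁ C₂ : ℕ → Set X} (h₁ : TailP 𝔅 C₁)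
    (h₂ : TailP 𝔅 C₂) : TailP 𝔅 (fun m => C₁ m ∩ C₂ m) := by
  intro B hB
  obtain ⟨a, δ₁, H₁⟩ := h₁ B hB
  obtain ⟨b, δ₂, H₂⟩ := h₂ B hB
  refine ⟨max a b, fun m => min (δ₁ m) (δ₂ m), fun m hm => ?_⟩
  obtain ⟨p₁, s₁⟩ := H₁ m (le_trans (le_max_left a b) hm)
  obtain ⟨p₂, s₂⟩ := H₂ m (le_trans (le_max_right a b) hm)
  exact ⟨lt_min p₁ p₂, Set.subset_inter
    ((enl_mono (min_le_left _ _)).trans s₁) ((enl_mono (min_le_right _ _)).trans s₂)⟩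

lemma aux_gamma {𝔅 : Set (Set X)} (hsing : ∀ x : X, {x} ∈ 𝔅) (C : ℕ → Set X)
    (hopen : ∀ m, IsOpen (C m)) (hne : ∀ m, C m ≠ Set.univ)
    (htail : TailP 𝔅 C) : IsGammaCover 𝔅 C := by
  have hfib : ∀ A : Set X, A ∈ Set.range C → {m | C m = A}.Finite := by
    intro A hA
    by_contra hinf
    have hinf' : {m | C m = A}.Infinite := hinf
    have hAuniv : A = Set.univ := by
      ext x
      simp only [Set.mem_univ, iff_true]
      obtain ⟨m₀, δ, H⟩ := htail {x} (hsing x)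
      obtain ⟨m, hmA, hm₀⟩ := hinf'.exists_gt m₀
      obtain ⟨hδ, hsub⟩ := H m (le_of_lt hm₀)
      exact hmA ▸ hsub (mem_enl_self (Set.mem_singleton x) hδ)
    obtain ⟨m, rfl⟩ := hA
    exact hne m hAuniv
  refine ⟨hopen, ?_, ?_, htail⟩
  · rw [Set.eq_univ_iff_forall]
    intro x
    obtain ⟨m₀, δ, H⟩ := htail {x} (hsing x)
    obtain ⟨hδ, hsub⟩ := H m₀ le_rfl
    exact Set.mem_iUnion.2 ⟨m₀, hsub (mem_enl_self (Set.mem_singleton x) hδ)⟩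
  · intro hfin
    have hbig : (⋃ A ∈ Set.range C, {m | C m = A}).Finite := hfin.biUnion hfib
    have hsub : (Set.univ : Set ℕ) ⊆ ⋃ A ∈ Set.range C, {m | C m = A} := by
      intro m _
      exact Set.mem_biUnion (Set.mem_range_self m) (Set.mem_setOf_eq ▸ rfl)
    exact Set.infinite_univ (hbig.subset hsub)

lemma aux_posInf {C : ℕ → Set X} {p : Set X → Prop}
    (h : {A | A ∈ Set.range C ∧ p A}.Infinite) : {m | p (C m)}.Infinite := by
  intro hfin
  apply h
  apply (hfin.image C).subset
  rintro A ⟨⟨m, rfl⟩, hp⟩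
  exact ⟨m, hp, rfl⟩

lemma aux_notmem_tail {S : Set ℕ} (h : S.Finite) : ∃ N, ∀ k, N ≤ k → k ∉ S := by
  obtain ⟨b, hb⟩ := h.bddAbove
  exact ⟨b + 1, fun k hk hkS => by have := hb hkS; omega⟩

lemma exists_enum {p : ℕ → Prop} (hp : (setOf p).Infinite) :
    ∃ e : ℕ → ℕ, (∀ m, m ≤ e m) ∧ ∀ m, p (e m) :=
  ⟨Nat.nth p, fun m => (Nat.nth_strictMono hp).le_apply,
    fun m => Nat.nth_mem_of_infinite hp m⟩

def VV (U' : ℕ → ℕ → Set X) : ℕ → ℕ → Set X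
  | 0 => U' 0
  | n + 1 => fun m => VV U' n m ∩ U' (n + 1) m

lemma VV_subset (U' : ℕ → ℕ → Set X) : ∀ n i, i ≤ n → ∀ m, VV U' n m ⊆ U' i m := by
  intro n
  induction n with
  | zero => intro i hi m; interval_cases i; exact subset_rfl
  | succ n ih =>
      intro i hi m
      rcases Nat.lt_or_ge i (n + 1) with hlt | hge
      · exact (Set.inter_subset_left).trans (ih i (Nat.lt_succ_iff.mp hlt) m)
      · have : i = n + 1 := le_antisymm hi hge
        subst this
        exact Set.inter_subset_right

lemma VV_open {U' : ℕ → ℕ → Set X} (h : ∀ i m, IsOpen (U' i m)) :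
    ∀ n m, IsOpen (VV U' n m) := by
  intro n
  induction n with
  | zero => exact h 0
  | succ n ih => exact fun m => (ih m).inter (h (n + 1) m)

lemma VV_tail {𝔅 : Set (Set X)} {U' : ℕ → ℕ → Set X}
    (h : ∀ i, TailP 𝔅 (U' i)) : ∀ n, TailP 𝔅 (VV U' n) := by
  intro n
  induction n with
  | zero => exact h 0
  | succ n ih => exact tailP_inter ih (h (n + 1))

lemma VV_ne_univ {U' : ℕ → ℕ → Set X} (h : ∀ m, U' 0 m ≠ Set.univ) :
    ∀ n m, VV U' n m ≠ Set.univ := by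
  intro n m huniv
  apply h m
  apply Set.eq_univ_of_univ_subset
  rw [← huniv]
  exact VV_subset U' n 0 (Nat.zero_le n) m

-- helper for the greedy recursion
open scoped Classical in
noncomputable def greedyG (Af : Finset (Set X) → ℕ → Set X) : ℕ → Finset (Set X) :=
  fun k => Nat.rec ∅ (fun k Gk => insert (Af Gk k) Gk) k

/-- Branch E2: some level `nb` has almost all values common to infinitely many levels. -/
lemma branchE2 {𝔅 : Set (Set X)} (hsing : ∀ x : X, {x} ∈ 𝔅)
    (U' : ℕ → ℕ → Set X)
    (hopen : ∀ n m, IsOpen (U' n m)) (hne : ∀ n m, U' n m ≠ Set.univ)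
    (htail : ∀ n, TailP 𝔅 (U' n))
    (J : Set (Set X)) (hJ : ∀ A ∈ J, {n | A ∈ Set.range (VV U' n)}.Infinite)
    (nb : ℕ) (hGinf : {m | VV U' nb m ∈ J}.Infinite) :
    ∃ μ : ℕ → ℕ, IsGammaCover 𝔅 (fun k => U' k (μ k)) := by
  classical
  obtain ⟨g, hgle, hgmem⟩ := exists_enum hGinf
  have hpickE : ∀ k, ∃ r, VV U' nb (g k) ⊆ U' k r := by
    intro k
    have hinf : {n | VV U' nb (g k) ∈ Set.range (VV U' n)}.Infinite := hJ _ (hgmem k)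
    obtain ⟨ν, hν, hkν⟩ := hinf.exists_gt k
    obtain ⟨r, hr⟩ := hν
    have hsub := VV_subset U' ν k (le_of_lt hkν) r
    rw [hr] at hsub
    exact ⟨r, hsub⟩
  choose μ hμ using hpickE
  refine ⟨μ, aux_gamma hsing _ (fun m => hopen m (μ m)) (fun m => hne m (μ m)) ?_⟩
  intro B hB
  obtain ⟨m₀, δ, H⟩ := VV_tail htail nb B hB
  refine ⟨m₀, fun k => δ (g k), fun k hk => ?_⟩
  obtain ⟨hp, hs⟩ := H (g k) (le_trans hk (hgle k))
  exact ⟨hp, hs.trans (hμ k)⟩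

/-- Branch E1: every level has infinitely many values outside the common pool `J`;
use α₄ and a greedy choice of pairwise distinct witnesses. -/
lemma branchE1 {𝔅 : Set (Set X)} (hsing : ∀ x : X, {x} ∈ 𝔅)
    (hα : Alpha4Gamma 𝔅)
    (U' : ℕ → ℕ → Set X)
    (hopen : ∀ n m, IsOpen (U' n m)) (hne : ∀ n m, U' n m ≠ Set.univ)
    (htail : ∀ n, TailP 𝔅 (U' n))
    (J : Set (Set X)) (hJ : ∀ A, {n | A ∈ Set.range (VV U' n)}.Infinite → A ∈ J)
    (hpos : ∀ n, {m | VV U' n m ∉ J}.Infinite) :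
    ∃ μ : ℕ → ℕ, IsGammaCover 𝔅 (fun k => U' k (μ k)) := by
  classical
  have hech : ∀ n, ∃ e : ℕ → ℕ, (∀ m, m ≤ e m) ∧ ∀ m, VV U' n (e m) ∉ J :=
    fun n => exists_enum (hpos n)
  choose e hele hemem using hech
  have hWpgamma : ∀ n, IsGammaCover 𝔅 (fun m => VV U' n (e n m)) := by
    intro n
    exact aux_gamma hsing _
      (fun m => VV_open hopen n (e n m))
      (fun m => VV_ne_univ (fun m' => hne 0 m') n (e n m))
      (tailP_comp (VV_tail htail n) (e n) (hele n))
  obtain ⟨V, hV, hS⟩ := hα (fun n m => VV U' n (e n m)) hWpgamma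
  obtain ⟨hVopen, hVunion, hVrange, hVtail⟩ := hV
  have step : ∀ (P : Finset (Set X)) (N : ℕ),
      ∃ n, N ≤ n ∧ ∃ A, (A ∈ Set.range V ∧
        A ∈ Set.range (fun m => VV U' n (e n m))) ∧ A ∉ P := by
    intro P N
    by_contra hcon
    push_neg at hcon
    have hS' : ({n | (Set.range V ∩
        Set.range (fun m => VV U' n (e n m))).Nonempty} \ Set.Iio N).Infinite :=
      hS.diff (Set.finite_Iio N)
    have hsub : ({n | (Set.range V ∩
        Set.range (fun m => VV U' n (e n m))).Nonempty} \ Set.Iio N) ⊆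
        ⋃ A ∈ (P : Set (Set X)), {n | A ∈ Set.range (fun m => VV U' n (e n m))} := by
      rintro n ⟨hA, hN⟩
      obtain ⟨A, hAmem⟩ := hA
      have hNn : N ≤ n := not_lt.mp hN
      have hAP : A ∈ P := hcon n hNn A ⟨hAmem.1, hAmem.2⟩
      exact Set.mem_biUnion hAP hAmem.2
    have hex : ∃ A ∈ (P : Set (Set X)),
        {n | A ∈ Set.range (fun m => VV U' n (e n m))}.Infinite := by
      by_contra hall
      push_neg at hall
      have hf : (⋃ A ∈ (P : Set (Set X)),
          {n | A ∈ Set.range (fun m => VV U' n (e n m))}).Finite :=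
        P.finite_toSet.biUnion (fun A hA => hall A hA)
      exact hS' (hf.subset hsub)
    obtain ⟨A, hAP, hAinf⟩ := hex
    have hsub2 : {n | A ∈ Set.range (fun m => VV U' n (e n m))} ⊆
        {n | A ∈ Set.range (VV U' n)} := by
      rintro n ⟨m, hm⟩
      exact ⟨e n m, hm⟩
    have hAJ : A ∈ J := hJ A (hAinf.mono hsub2)
    obtain ⟨n₁, hn₁⟩ := hAinf.nonempty
    obtain ⟨m, hm⟩ := hn₁
    rw [← hm] at hAJ
    exact hemem n₁ m hAJ
  choose nf hnf Af hAf hAfP using step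
  have hseq : ∃ (AA : ℕ → Set X) (nn : ℕ → ℕ),
      (∀ k, k ≤ nn k) ∧ Function.Injective AA ∧
      (∀ k, AA k ∈ Set.range V) ∧
      (∀ k, AA k ∈ Set.range (fun m => VV U' (nn k) (e (nn k) m))) := by
    refine ⟨fun k => Af (greedyG Af k) k, fun k => nf (greedyG Af k) k,
      fun k => hnf _ _, ?_, fun k => (hAf _ _).1, fun k => (hAf _ _).2⟩
    have hGsucc : ∀ k, greedyG Af (k + 1) =
        insert (Af (greedyG Af k) k) (greedyG Af k) := fun k => rfl
    have hfresh : ∀ k, Af (greedyG Af k) k ∉ greedyG Af k := fun k => hAfP _ _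
    have hmemG : ∀ k, Af (greedyG Af k) k ∈ greedyG Af (k + 1) := by
      intro k
      rw [hGsucc]
      exact Finset.mem_insert_self _ _
    have hGmono : Monotone (greedyG Af) := by
      apply monotone_nat_of_le_succ
      intro k
      rw [hGsucc]
      exact Finset.le_iff_subset.mpr (Finset.subset_insert _ _)
    have key : ∀ a b, a < b → Af (greedyG Af a) a ≠ Af (greedyG Af b) b := by
      intro a b hab heq
      have h1 : Af (greedyG Af a) a ∈ greedyG Af b :=
        hGmono (Nat.succ_le_of_lt hab) (hmemG a)
      rw [heq] at h1
      exact hfresh b h1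
    intro a b heq
    rcases lt_trichotomy a b with hlt | heqab | hgt
    · exact absurd heq (key a b hlt)
    · exact heqab
    · exact absurd heq.symm (key b a hgt)
  obtain ⟨AA, nn, hnk, hAAinj, hAV, hAW⟩ := hseq
  have hpickE : ∀ k, ∃ r, AA k ⊆ U' k r := by
    intro k
    obtain ⟨m, hm⟩ := hAW k
    refine ⟨e (nn k) m, ?_⟩
    rw [← hm]
    exact VV_subset U' (nn k) k (hnk k) (e (nn k) m)
  choose μ hμ using hpickE
  choose jj hjj using hAV
  have hjinj : Function.Injective jj := by
    intro a b hab
    apply hAAinj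
    rw [← hjj a, ← hjj b, hab]
  refine ⟨μ, aux_gamma hsing _ (fun m => hopen m (μ m)) (fun m => hne m (μ m)) ?_⟩
  intro B hB
  obtain ⟨m₀, δ, H⟩ := hVtail B hB
  have hfin : {k | jj k < m₀}.Finite := by
    have heq : {k | jj k < m₀} = jj ⁻¹' (Set.Iio m₀) := rfl
    rw [heq]
    exact Set.Finite.preimage (Set.injOn_of_injective hjinj) (Set.finite_Iio m₀)
  obtain ⟨k₀, hk₀⟩ := aux_notmem_tail hfin
  refine ⟨k₀, fun k => δ (jj k), fun k hk => ?_⟩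
  have hge : m₀ ≤ jj k := not_lt.mp (fun hlt => hk₀ k hk hlt)
  obtain ⟨hp, hs⟩ := H (jj k) hge
  refine ⟨hp, hs.trans ?_⟩
  rw [hjj k]
  exact hμ k

theorem statement9 (𝔅 : Set (Set X)) (h𝔅 : IsBorn 𝔅) (h : Alpha4Gamma 𝔅) :
    S1Gamma 𝔅 := by
  classical
  obtain ⟨hne𝔅, hcov, hun, hher⟩ := h𝔅
  have hsing : ∀ x : X, {x} ∈ 𝔅 := by
    intro x
    have hx : x ∈ ⋃₀ 𝔅 := by rw [hcov]; trivial
    obtain ⟨B, hB, hxB⟩ := hx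
    exact hher B hB {x} (Set.singleton_subset_iff.2 hxB) ⟨x, rfl⟩
  intro U hU
  have hqinf : ∀ n, {m | U n m ≠ Set.univ}.Infinite := by
    intro n
    apply aux_posInf (p := fun A => A ≠ Set.univ)
    have heq : {A | A ∈ Set.range (U n) ∧ A ≠ Set.univ} =
        Set.range (U n) \ {Set.univ} := by
      ext A
      simp [Set.mem_diff]
    rw [heq]
    exact ((hU n).2.2.1).diff (Set.finite_singleton _)
  have hφch : ∀ n, ∃ φ : ℕ → ℕ, (∀ m, m ≤ φ m) ∧ ∀ m, U n (φ m) ≠ Set.univ :=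
    fun n => exists_enum (hqinf n)
  choose φ hφle hφne using hφch
  have htail' : ∀ n, TailP 𝔅 (fun m => U n (φ n m)) := by
    intro n
    have h0 : TailP 𝔅 (U n) := (hU n).2.2.2
    exact tailP_comp h0 (φ n) (hφle n)
  have hopen' : ∀ n m, IsOpen ((fun n m => U n (φ n m)) n m) :=
    fun n m => (hU n).1 _
  have hne' : ∀ n m, (fun n m => U n (φ n m)) n m ≠ Set.univ :=
    fun n m => hφne n m
  by_cases hE : ∀ n, {m | VV (fun n m => U n (φ n m)) n m ∉
      {A | {n' | A ∈ Set.range (VV (fun n m => U n (φ n m)) n')}.Infinite}}.Infinite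
  · obtain ⟨μ, hμ⟩ := branchE1 hsing h (fun n m => U n (φ n m)) hopen' hne' htail'
      {A | {n' | A ∈ Set.range (VV (fun n m => U n (φ n m)) n')}.Infinite}
      (fun A hA => hA) hE
    exact ⟨fun n => φ n (μ n), hμ⟩
  · push_neg at hE
    obtain ⟨nb, hfin⟩ := hE
    have hGinf : {m | VV (fun n m => U n (φ n m)) nb m ∈
        {A | {n' | A ∈ Set.range (VV (fun n m => U n (φ n m)) n')}.Infinite}}.Infinite := by
      have h1 : ((Set.univ : Set ℕ) \ {m | VV (fun n m => U n (φ n m)) nb m ∉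
          {A | {n' | A ∈ Set.range (VV (fun n m => U n (φ n m)) n')}.Infinite}}).Infinite :=
        Set.infinite_univ.diff hfin
      apply h1.mono
      intro m hm
      exact not_not.mp hm.2
    obtain ⟨μ, hμ⟩ := branchE2 hsing (fun n m => U n (φ n m)) hopen' hne' htail'
      {A | {n' | A ∈ Set.range (VV (fun n m => U n (φ n m)) n')}.Infinite}
      (fun A hA => hA) nb hGinf
    exact ⟨fun n => φ n (μ n), hμ⟩
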